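/- Let p > 1, C > 0, R ≥ 1. Let θ : [R, ∞) → [0, ∞) be nonincreasing with θ(s) ≤ C·s^{−p} for all s ≥ R, and let g̃ : [R, ∞) → [0, ∞) be nondecreasing and continuous with ∫_R^∞ g̃(s) s^{−p−1} ds < ∞. Then the Lebesgue–Stieltjes integral ∫_{(R,∞)} g̃ d(−θ) is finite and satisfies ∫_{(R,∞)} g̃ d(−θ) ≤ 2Cp ∫_R^∞ g̃(s) s^{−p−1} ds. -/

import Mathlib

open Real MeasureTheory Set

/-- integration-by-parts bound for the Lebesgue–Stieltjes integral
`∫_{(R,∞)} g̃ d(−θ)`, where `θ = −F` is nonincreasing (with `F` a Stieltjes function,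
so `F.measure` is the Lebesgue–Stieltjes measure `d(−θ)`), `0 ≤ θ(s) ≤ C s^{−p}` on `[R,∞)`,
and `g̃ ≥ 0` is nondecreasing and continuous with `∫_R^∞ g̃(s) s^{−p−1} ds < ∞`. Then
`∫_{(R,∞)} g̃ d(−θ)` is finite and bounded by `2Cp ∫_R^∞ g̃(s) s^{−p−1} ds`. -/
theorem stmt7 (p C R : ℝ) (hp : 1 < p) (hC : 0 < C) (hR : 1 ≤ R)
    (F : StieltjesFunction ℝ) (θ : ℝ → ℝ) (hθF : ∀ s, θ s = -F s)
    (hθ0 : ∀ s ∈ Ici R, 0 ≤ θ s)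
    (hθbound : ∀ s ∈ Ici R, θ s ≤ C * s ^ (-p))
    (g : ℝ → ℝ) (hg0 : ∀ s ∈ Ici R, 0 ≤ g s)
    (hgmono : MonotoneOn g (Ici R)) (hgcont : ContinuousOn g (Ici R))
    (hgint : IntegrableOn (fun s : ℝ => g s * s ^ (-p - 1)) (Ioi R)) :
    (∫⁻ s in Ioi R, ENNReal.ofReal (g s) ∂F.measure) ≠ ⊤ ∧
      ∫⁻ s in Ioi R, ENNReal.ofReal (g s) ∂F.measure ≤
        ENNReal.ofReal (2 * C * p * ∫ s in Ioi R, g s * s ^ (-p - 1)) := by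
  have hR0 : (0:ℝ) < R := lt_of_lt_of_le one_pos hR
  have hp0 : (0:ℝ) < p := lt_trans one_pos hp
  set d : ℝ → ENNReal := fun s => ENNReal.ofReal (s ^ (-p - 1)) with hd
  set μ' : Measure ℝ := (volume.restrict (Ioi R)).withDensity d with hμ'
  set ν : Measure ℝ := F.measure.restrict (Ioi R) with hν
  have hgcont' : ContinuousOn g (Ioi R) := hgcont.mono Ioi_subset_Ici_self
  -- superlevel sets are Ioi a
  have hkey : ∀ t : ℝ, ν {s | t < g s} ≤ ENNReal.ofReal (C * p) * μ' {s | t < g s} := by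
    intro t
    set B : Set ℝ := {s | t < g s} with hB
    have hνB : ν B = F.measure (B ∩ Ioi R) := Measure.restrict_apply' measurableSet_Ioi
    rcases eq_empty_or_nonempty (B ∩ Ioi R) with he | hne
    · simp [hνB, he]
    · set a := sInf (B ∩ Ioi R) with ha
      have hbdd : BddBelow (B ∩ Ioi R) := ⟨R, fun x hx => le_of_lt hx.2⟩
      have haR : R ≤ a := le_csInf hne (fun x hx => le_of_lt hx.2)
      have ha0 : (0:ℝ) < a := lt_of_lt_of_le hR0 haR
      have hopen : IsOpen (Ioi R ∩ g ⁻¹' (Ioi t)) :=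
        hgcont'.isOpen_inter_preimage isOpen_Ioi isOpen_Ioi
      have hBset : B ∩ Ioi R = Ioi R ∩ g ⁻¹' (Ioi t) := by
        ext x; simp [hB, and_comm, mem_preimage]
      have hSeq : B ∩ Ioi R = Ioi a := by
        apply Subset.antisymm
        · intro x hx
          have hax : a ≤ x := csInf_le hbdd hx
          rcases eq_or_lt_of_le hax with heq | hlt
          · exfalso
            have haS : a ∈ B ∩ Ioi R := heq ▸ hx
            rw [hBset] at haS
            obtain ⟨ε, hε, hball⟩ := Metric.isOpen_iff.1 hopen a haS
            have : a - ε/2 ∈ Ioi R ∩ g ⁻¹' (Ioi t) := by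
              apply hball
              simp only [Metric.mem_ball, Real.dist_eq]
              rw [show a - ε/2 - a = -(ε/2) by ring, abs_neg, abs_of_nonneg (by linarith)]
              linarith
            have : a - ε/2 ∈ B ∩ Ioi R := by rw [hBset]; exact this
            have := csInf_le hbdd this
            linarith
          · exact hlt
        · intro x hx
          obtain ⟨s', hs', hs'x⟩ := exists_lt_of_csInf_lt hne hx
          have hxR : R < x := lt_of_le_of_lt haR hx
          refine ⟨?_, hxR⟩
          have : g s' ≤ g x := hgmono (mem_Ici.2 (le_of_lt hs'.2)) (mem_Ici.2 (le_of_lt hxR)) (le_of_lt hs'x)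
          exact lt_of_lt_of_le hs'.1 this
      -- ν bound
      have hν_bound : F.measure (Ioi a) ≤ ENNReal.ofReal (C * a ^ (-p)) := by
        have hunion : Ioi a = ⋃ n : ℕ, Ioc a (a + n) := by
          ext x
          simp only [mem_Ioi, mem_iUnion, mem_Ioc]
          constructor
          · intro hx
            exact ⟨⌈x - a⌉₊, hx, by linarith [Nat.le_ceil (x - a)]⟩
          · rintro ⟨n, hn, -⟩; exact hn
        have hmono : Monotone (fun n : ℕ => Ioc a (a + n)) := by
          intro m n hmn
          apply Ioc_subset_Ioc le_rfl
          have : (m:ℝ) ≤ n := Nat.cast_le.2 hmn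
          linarith
        rw [hunion, hmono.directed_le.measure_iUnion]
        apply iSup_le
        intro n
        rw [F.measure_Ioc]
        apply ENNReal.ofReal_le_ofReal
        have h1 : 0 ≤ θ (a + n) := hθ0 _ (by simp only [mem_Ici]; linarith [n.cast_nonneg (α := ℝ)])
        have h2 : θ a ≤ C * a ^ (-p) := hθbound a haR
        have e1 := hθF (a + n)
        have e2 := hθF a
        linarith
      -- μ' bound
      have hμ'_eval : μ' (Ioi a) = ENNReal.ofReal (a ^ (-p) / p) := by
        rw [hμ', withDensity_apply _ measurableSet_Ioi,
          Measure.restrict_restrict measurableSet_Ioi, Ioi_inter_Ioi, sup_eq_left.2 haR]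
        rw [show d = fun s => ENNReal.ofReal (s ^ (-p-1)) from rfl]
        rw [← ofReal_integral_eq_lintegral_ofReal
          (integrableOn_Ioi_rpow_of_lt (by linarith) ha0)
          ((ae_restrict_iff' measurableSet_Ioi).2 (ae_of_all _ (fun x hx =>
            Real.rpow_nonneg (le_of_lt (lt_trans ha0 hx)) _)))]
        congr 1
        rw [integral_Ioi_rpow_of_lt (by linarith) ha0]
        rw [show -p - 1 + 1 = -p by ring]
        field_simp
      have hIoi_sub : Ioi a ⊆ B := by
        intro x hx
        have : x ∈ B ∩ Ioi R := hSeq ▸ hx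
        exact this.1
      calc ν B = F.measure (Ioi a) := by rw [hνB, hSeq]
        _ ≤ ENNReal.ofReal (C * a ^ (-p)) := hν_bound
        _ = ENNReal.ofReal (C * p) * ENNReal.ofReal (a ^ (-p) / p) := by
            rw [← ENNReal.ofReal_mul (by positivity)]
            congr 1
            field_simp
        _ = ENNReal.ofReal (C * p) * μ' (Ioi a) := by rw [hμ'_eval]
        _ ≤ ENNReal.ofReal (C * p) * μ' B := by
            exact mul_le_mul_right (measure_mono hIoi_sub) _
  -- measurability and positivity facts
  have hgae_ν : AEMeasurable g ν := hgcont'.aemeasurable measurableSet_Ioi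
  have hg_nn_ν : 0 ≤ᵐ[ν] g :=
    (ae_restrict_iff' measurableSet_Ioi).2 (ae_of_all _ (fun s hs => hg0 s (mem_Ici.2 (le_of_lt hs))))
  have hac : μ' ≪ volume.restrict (Ioi R) := withDensity_absolutelyContinuous _ _
  have hgae_μ' : AEMeasurable g μ' :=
    (hgcont'.aemeasurable measurableSet_Ioi).mono_ac hac
  have hg_nn_μ' : 0 ≤ᵐ[μ'] g :=
    hac.ae_le ((ae_restrict_iff' measurableSet_Ioi).2 (ae_of_all _ (fun s hs => hg0 s (mem_Ici.2 (le_of_lt hs)))))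
  have hd_meas : Measurable d := by
    apply Measurable.ennreal_ofReal
    fun_prop
  have hd_fin : ∀ᵐ x ∂(volume.restrict (Ioi R)), d x < ⊤ :=
    ae_of_all _ (fun x => ENNReal.ofReal_lt_top)
  -- the integral I and its nonnegativity
  set I : ℝ := ∫ s in Ioi R, g s * s ^ (-p - 1) with hI
  have hI0 : 0 ≤ I := by
    apply integral_nonneg_of_ae
    exact (ae_restrict_iff' measurableSet_Ioi).2 (ae_of_all _ (fun s hs =>
      mul_nonneg (hg0 s (mem_Ici.2 (le_of_lt hs))) (Real.rpow_nonneg (lt_trans hR0 hs).le _)))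
  -- main chain
  have hmain : (∫⁻ s in Ioi R, ENNReal.ofReal (g s) ∂F.measure) ≤ ENNReal.ofReal (C * p * I) := by
    calc (∫⁻ s in Ioi R, ENNReal.ofReal (g s) ∂F.measure)
        = ∫⁻ t in Ioi 0, ν {s | t < g s} := lintegral_eq_lintegral_meas_lt ν hg_nn_ν hgae_ν
      _ ≤ ∫⁻ t in Ioi 0, ENNReal.ofReal (C * p) * μ' {s | t < g s} :=
          lintegral_mono (fun t => hkey t)
      _ = ENNReal.ofReal (C * p) * ∫⁻ t in Ioi 0, μ' {s | t < g s} :=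
          lintegral_const_mul' _ _ ENNReal.ofReal_ne_top
      _ = ENNReal.ofReal (C * p) * ∫⁻ s, ENNReal.ofReal (g s) ∂μ' := by
          rw [lintegral_eq_lintegral_meas_lt μ' hg_nn_μ' hgae_μ']
      _ = ENNReal.ofReal (C * p) * ∫⁻ s in Ioi R, d s * ENNReal.ofReal (g s) := by
          rw [hμ', lintegral_withDensity_eq_lintegral_mul_non_measurable _ hd_meas hd_fin]
          rfl
      _ = ENNReal.ofReal (C * p) * ∫⁻ s in Ioi R, ENNReal.ofReal (g s * s ^ (-p - 1)) := by
          congr 1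
          apply lintegral_congr_ae
          apply (ae_restrict_iff' measurableSet_Ioi).2 (ae_of_all _ (fun s hs => ?_))
          simp only [hd]
          rw [← ENNReal.ofReal_mul (Real.rpow_nonneg (lt_trans hR0 hs).le _),
            mul_comm (s ^ (-p-1))]
      _ = ENNReal.ofReal (C * p) * ENNReal.ofReal I := by
          rw [hI, ofReal_integral_eq_lintegral_ofReal hgint
            ((ae_restrict_iff' measurableSet_Ioi).2 (ae_of_all _ (fun s hs => by
              exact mul_nonneg (hg0 s (mem_Ici.2 (le_of_lt hs)))
                (Real.rpow_nonneg (lt_trans hR0 hs).le _))))]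
      _ = ENNReal.ofReal (C * p * I) := by
          rw [← ENNReal.ofReal_mul (by positivity)]
  constructor
  · exact ne_top_of_le_ne_top ENNReal.ofReal_ne_top hmain
  · refine le_trans hmain (ENNReal.ofReal_le_ofReal ?_)
    nlinarith [mul_nonneg (mul_nonneg hC.le hp0.le) hI0]
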